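/- Let A be a unital C*-algebra and E a Hilbert C*-module over A with A-valued inner product ⟪·,·⟫ and right action ξ·a. Suppose (ζ_j)_{j=1}^m is a finite frame for E. Define the matrix P ∈ M_m(A) by P_{jk} := ⟪ζ_j, ζ_k⟫, and the maps Φ : E → Aᵐ, Φ(ξ) := (⟪ζ_j, ξ⟫)_{j=1}^m, and Ψ : Aᵐ → E, Ψ((a_j)_j) := ∑_{j=1}^m ζ_j·a_j. Then: (i) P is self-adjoint, i.e. (P_{jk})* = P_{kj} for all j, k; (ii) P is idempotent, i.e. ∑_{k=1}^m ⟪ζ_j, ζ_k⟫⟪ζ_k, ζ_l⟫ = ⟪ζ_j, ζ_l⟫ for all j, l; (iii) Ψ(Φ(ξ)) = ξ for all ξ ∈ E, and Φ(Ψ(a)) = P·a for all a ∈ Aᵐ (matrix-vector multiplication); (iv) if a, b ∈ Aᵐ satisfy P·a = a and P·b = b, then ⟪Ψ(a), Ψ(b)⟫ = ∑_{j=1}^m a_j* b_j. -/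

import Mathlib

open scoped RightActions

/-- The Hilbert C⋆-module class of the older Mathlib (right `Aᵐᵒᵖ`-action), whose name
`CStarModule` now denotes a left-module variant. -/
class RightCStarModule (A : outParam Type*) (E : Type*) [NonUnitalSemiring A] [StarRing A]
    [Module ℂ A] [AddCommGroup E] [Module ℂ E] [PartialOrder A] [SMul Aᵐᵒᵖ E] [Norm A] [Norm E]
    extends Inner A E where
  inner_add_right {x} {y} {z} : inner x (y + z) = inner x y + inner x z
  inner_self_nonneg {x} : 0 ≤ inner x x
  inner_self {x} : inner x x = 0 ↔ x = 0
  inner_op_smul_right {a : A} {x y : E} : inner x (y <• a) = inner x y * a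
  inner_smul_right_complex {z : ℂ} {x} {y} : inner x (z • y) = z • inner x y
  star_inner x y : star (inner x y) = inner y x
  norm_eq_sqrt_norm_inner_self x : ‖x‖ = Real.sqrt ‖inner x x‖

section
variable {A E : Type*} [CStarAlgebra A] [PartialOrder A] [StarOrderedRing A]
    [NormedAddCommGroup E] [Module ℂ E] [Module Aᵐᵒᵖ E] [RightCStarModule A E]

theorem RightCStarModule.inner_zero_right' (x : E) : inner A x (0 : E) = 0 := by
  have h := RightCStarModule.inner_add_right (A := A) (x := x) (y := (0 : E)) (z := 0)
  simp only [add_zero] at h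
  exact add_left_cancel (h.symm.trans (add_zero _).symm)

theorem RightCStarModule.inner_sum_right {ι : Type*} (s : Finset ι) (x : E) (f : ι → E) :
    inner A x (∑ i ∈ s, f i) = ∑ i ∈ s, inner A x (f i) := by
  classical
  refine Finset.induction_on s ?_ ?_
  · simp [RightCStarModule.inner_zero_right']
  · intro i s hi ih
    rw [Finset.sum_insert hi, Finset.sum_insert hi, RightCStarModule.inner_add_right, ih]

theorem RightCStarModule.inner_sum_left {ι : Type*} (s : Finset ι) (x : E) (f : ι → E) :
    inner A (∑ i ∈ s, f i) x = ∑ i ∈ s, inner A (f i) x := by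
  rw [← RightCStarModule.star_inner x (∑ i ∈ s, f i), RightCStarModule.inner_sum_right, star_sum]
  simp only [RightCStarModule.star_inner]

theorem RightCStarModule.inner_op_smul_left (a : A) (x y : E) :
    inner A (x <• a) y = star a * inner A x y := by
  rw [← RightCStarModule.star_inner y (x <• a), RightCStarModule.inner_op_smul_right, star_mul,
    RightCStarModule.star_inner]

end

/-- Let `A` be a unital C⋆-algebra and `E` a Hilbert C⋆-module over `A`
with a finite frame `(ζⱼ)ⱼ`.  With `P = (⟪ζⱼ, ζₖ⟫)` ∈ `Mₘ(A)`, `Φ(ξ) = (⟪ζⱼ, ξ⟫)ⱼ` and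
`Ψ((aⱼ)ⱼ) = ∑ ζⱼ·aⱼ` we have: (i) `P` is self-adjoint; (ii) `P` is idempotent;
(iii) `Ψ∘Φ = id` and `Φ∘Ψ = P·`; (iv) if `P·a = a` and `P·b = b` then
`⟪Ψ(a), Ψ(b)⟫ = ∑ aⱼ⋆ bⱼ`. -/
theorem frame_projection_properties
    {A E : Type*} [CStarAlgebra A] [PartialOrder A] [StarOrderedRing A]
    [NormedAddCommGroup E] [Module ℂ E] [Module Aᵐᵒᵖ E] [RightCStarModule A E] [CompleteSpace E]
    {m : ℕ} (ζ : Fin m → E)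
    (hframe : ∀ ξ : E, ∑ j, ζ j <• (inner A (ζ j) ξ : A) = ξ) :
    -- (i) `P` is self-adjoint
    (∀ j k, star (inner A (ζ j) (ζ k) : A) = inner A (ζ k) (ζ j)) ∧
    -- (ii) `P` is idempotent
    (∀ j l, ∑ k, (inner A (ζ j) (ζ k) : A) * (inner A (ζ k) (ζ l) : A)
      = (inner A (ζ j) (ζ l) : A)) ∧
    -- (iii) `Ψ ∘ Φ = id` and `Φ ∘ Ψ = P ·`
    (∀ ξ : E, ∑ j, ζ j <• (inner A (ζ j) ξ : A) = ξ) ∧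
    (∀ (a : Fin m → A) (j : Fin m),
      (inner A (ζ j) (∑ k, ζ k <• a k) : A)
        = (Matrix.of fun j k => (inner A (ζ j) (ζ k) : A)).mulVec a j) ∧
    -- (iv) the inner product on `P·Aᵐ` induced by `Ψ` is the standard one
    (∀ a b : Fin m → A,
      (Matrix.of fun j k => (inner A (ζ j) (ζ k) : A)).mulVec a = a →
      (Matrix.of fun j k => (inner A (ζ j) (ζ k) : A)).mulVec b = b →
      (inner A (∑ j, ζ j <• a j) (∑ j, ζ j <• b j) : A) = ∑ j, star (a j) * b j) := by
  have hPhiPsi : ∀ (a : Fin m → A) (j : Fin m),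
      (inner A (ζ j) (∑ k, ζ k <• a k) : A)
        = (Matrix.of fun j k => (inner A (ζ j) (ζ k) : A)).mulVec a j := by
    intro a j
    simp [RightCStarModule.inner_sum_right, RightCStarModule.inner_op_smul_right, Matrix.mulVec,
      dotProduct]
  refine ⟨fun j k => RightCStarModule.star_inner _ _, ?_, hframe, hPhiPsi, ?_⟩
  · intro j l
    have := hPhiPsi (fun k => (inner A (ζ k) (ζ l) : A)) j
    rw [hframe (ζ l)] at this
    simpa [Matrix.mulVec, dotProduct] using this.symm
  · intro a b ha hb
    calc (inner A (∑ j, ζ j <• a j) (∑ j, ζ j <• b j) : A)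
        = ∑ j, star (a j) * (inner A (ζ j) (∑ k, ζ k <• b k) : A) := by
          simp only [RightCStarModule.inner_sum_left, RightCStarModule.inner_sum_right,
            RightCStarModule.inner_op_smul_left, RightCStarModule.inner_op_smul_right, Finset.mul_sum,
            Finset.sum_mul, mul_assoc]
          exact Finset.sum_comm
      _ = ∑ j, star (a j) * b j := by
          refine Finset.sum_congr rfl fun j _ => ?_
          rw [hPhiPsi b j, hb]
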